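/- Let R be a discrete valuation domain with prime element p, let G be a torsion R-module, let β be an ordinal, and let g ∈ p^βG[p] (i.e., g ∈ p^βG and pg = 0). Then there exists an R-module homomorphism f: P_β → G with f(β) = g, where β denotes the length-one generator of the Walker module P_β. -/

import Mathlib

universe u v w

open Ordinal

noncomputable def pPow (R : Type u) [CommRing R] (p : R) (G : Type v) [AddCommGroup G]
    [Module R G] (σ : Ordinal.{w}) : Submodule R G :=
  Ordinal.limitRecOn σ ⊤ (fun _ N => N.map (LinearMap.lsmul R G p))
    (fun o _ ih => ⨅ ρ : Set.Iio o, ih ρ.1 ρ.2)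

/-- Generators of the Walker module `P β`: strictly decreasing finite sequences of ordinals
starting with `β` (encoded by their tails). -/
def WalkerGen (β : Ordinal.{w}) : Type (w + 1) :=
  {l : List Ordinal.{w} // (β :: l).Chain' (· > ·)}

/-- The defining relation of the Walker module attached to a generator `g`:
`p • g - g'` where `g'` is obtained by deleting the last entry of `g`
(interpreted as `0` when `g` is the length-one sequence `β`). -/
noncomputable def walkerRel (R : Type u) [CommRing R] (p : R) (β : Ordinal.{w})
    (g : WalkerGen β) : WalkerGen β →₀ R :=
  p • Finsupp.single g 1 -
    if _h : g.1 = [] then 0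
    else Finsupp.single
      ⟨g.1.dropLast, g.2.sublist ((g.1.dropLast_sublist).cons₂ β)⟩ 1

/-- The Walker module `P β` over a discrete valuation domain with prime `p`. -/
noncomputable abbrev WalkerModule (R : Type u) [CommRing R] (p : R) (β : Ordinal.{w}) :=
  (WalkerGen β →₀ R) ⧸ Submodule.span R (Set.range (walkerRel R p β))

/-- The image in `P β` of a generator. -/
noncomputable def walkerMk (R : Type u) [CommRing R] (p : R) (β : Ordinal.{w})
    (g : WalkerGen β) : WalkerModule R p β :=
  Submodule.Quotient.mk (Finsupp.single g 1)

/-- The distinguished generator `β` of the Walker module `P β`. -/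
noncomputable def walkerTop (R : Type u) [CommRing R] (p : R) (β : Ordinal.{w}) :
    WalkerModule R p β :=
  walkerMk R p β ⟨[], List.isChain_singleton β⟩

section
variable (R : Type u) [CommRing R] (p : R) (G : Type v) [AddCommGroup G] [Module R G]

theorem pPow_succ (σ : Ordinal.{w}) :
    pPow R p G (σ + 1) = (pPow R p G σ).map (LinearMap.lsmul R G p) :=
  Ordinal.limitRecOn_succ _ _ _ _

theorem pPow_limit {σ : Ordinal.{w}} (h : Order.IsSuccLimit σ) :
    pPow R p G σ = ⨅ ρ : Set.Iio σ, pPow R p G ρ.1 := by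
  rw [pPow, Ordinal.limitRecOn_limit _ _ _ _ h]
  rfl

theorem pPow_anti {ρ σ : Ordinal.{w}} (h : ρ ≤ σ) : pPow R p G σ ≤ pPow R p G ρ := by
  induction σ using Ordinal.limitRecOn with
  | zero => rw [nonpos_iff_eq_zero.mp h]
  | add_one σ ih =>
    rcases (Order.le_succ_iff_eq_or_le.mp h) with h' | h'
    · rw [h', Ordinal.add_one_eq_succ]
    · refine le_trans ?_ (ih h')
      rw [pPow_succ]
      rintro x ⟨y, hy, rfl⟩
      exact Submodule.smul_mem _ p hy
  | limit σ hlim ih =>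
    rcases eq_or_lt_of_le h with rfl | h'
    · exact le_rfl
    · rw [pPow_limit R p G hlim]
      exact iInf_le (fun ρ' : Set.Iio σ => pPow R p G ρ'.1) ⟨ρ, h'⟩

theorem pPow_exists {ρ σ : Ordinal.{w}} (h : ρ < σ) {x : G} (hx : x ∈ pPow R p G σ) :
    ∃ y ∈ pPow R p G ρ, p • y = x := by
  have h1 : ρ + 1 ≤ σ := Order.succ_le_of_lt h
  have := pPow_anti R p G h1 hx
  rw [pPow_succ] at this
  obtain ⟨y, hy, hyx⟩ := this
  exact ⟨y, hy, hyx⟩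

variable {G}

open Classical in
/-- Choice function: value on the *reversed* tail of a generator. -/
noncomputable def wFun (g : G) : List Ordinal.{w} → G
  | [] => g
  | a :: rest =>
      if h : ∃ y ∈ pPow R p G a, p • y = wFun g rest then h.choose else 0

variable {R p} {β : Ordinal.{w}} {g : G}

theorem wFun_spec (hg : g ∈ pPow R p G β) :
    ∀ l : List Ordinal.{w}, l.Chain' (· < ·) → (∀ a ∈ l, a < β) →
      wFun R p g l ∈ pPow R p G (l.headD β) ∧
        ∀ a rest, l = a :: rest → p • wFun R p g l = wFun R p g rest := by
  intro l
  induction l with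
  | nil => exact fun _ _ => ⟨hg, fun a rest h => by simp at h⟩
  | cons a rest ih =>
    intro hc hb
    have hc' : rest.Chain' (· < ·) := hc.tail
    have hb' : ∀ x ∈ rest, x < β := fun x hx => hb x (List.mem_cons_of_mem a hx)
    obtain ⟨hmem, _⟩ := ih hc' hb'
    have halt : a < rest.headD β := by
      cases rest with
      | nil => exact hb a List.mem_cons_self
      | cons b t => exact List.isChain_cons_cons.mp hc |>.1
    have hex : ∃ y ∈ pPow R p G a, p • y = wFun R p g rest :=
      pPow_exists R p G halt hmem
    constructor
    · simpa [wFun, hex] using hex.choose_spec.1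
    · rintro a' rest' h
      obtain ⟨rfl, rfl⟩ : a = a' ∧ rest = rest' := by
        constructor <;> injection h
      simpa [wFun, hex] using hex.choose_spec.2

end

theorem stmt5 (R : Type u) [CommRing R] [IsDomain R] [IsDiscreteValuationRing R]
    (p : R) (hp : Irreducible p)
    (G : Type v) [AddCommGroup G] [Module R G] (hG : Module.IsTorsion R G)
    (β : Ordinal.{w}) (g : G) (hg1 : g ∈ pPow R p G β) (hg2 : p • g = 0) :
    ∃ f : WalkerModule R p β →ₗ[R] G, f (walkerTop R p β) = g := by
  classical
  have hgen : ∀ x : WalkerGen β,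
      x.1.reverse.Chain' (· < ·) ∧ ∀ a ∈ x.1.reverse, a < β := by
    rintro ⟨l, hl⟩
    have hpw : (β :: l).Pairwise (· > ·) := List.isChain_iff_pairwise.mp hl
    have h1 : ∀ a ∈ l, a < β := fun a ha => (List.pairwise_cons.mp hpw).1 a ha
    have h2 : l.Chain' (· > ·) := hl.tail
    exact ⟨List.isChain_reverse.mpr h2, fun a ha => h1 a (List.mem_reverse.mp ha)⟩
  have hker : Submodule.span R (Set.range (walkerRel R p β)) ≤ LinearMap.ker
      (Finsupp.linearCombination R (fun x : WalkerGen β => wFun R p g x.1.reverse)) := by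
    rw [Submodule.span_le]
    rintro _ ⟨x, rfl⟩
    have hx := hgen x
    have hspec := wFun_spec hg1 x.1.reverse hx.1 hx.2
    simp only [SetLike.mem_coe, LinearMap.mem_ker, walkerRel]
    by_cases h : x.1 = []
    · rw [dif_pos h, map_sub, map_zero]
      rw [map_smul, Finsupp.linearCombination_single, one_smul]
      rw [_root_.sub_zero]
      have : x.1.reverse = [] := by rw [h]; rfl
      rw [this]
      exact hg2
    · rw [dif_neg h]
      obtain ⟨a, rest, hcons⟩ := List.exists_cons_of_ne_nil
        (fun hnil => h (List.reverse_eq_nil_iff.mp hnil) : x.1.reverse ≠ [])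
      have hstep := hspec.2 a rest hcons
      erw [map_sub, map_smul, Finsupp.linearCombination_single,
        Finsupp.linearCombination_single, one_smul, one_smul]
      show p • wFun R p g x.1.reverse - wFun R p g (x.1.dropLast).reverse = 0
      rw [hstep, sub_eq_zero, ← List.tail_reverse, hcons]
      rfl
  refine ⟨(Submodule.span R (Set.range (walkerRel R p β))).liftQ _ hker, ?_⟩
  show (Finsupp.linearCombination R (fun x : WalkerGen β => wFun R p g x.1.reverse))
    (Finsupp.single ⟨[], List.isChain_singleton β⟩ 1) = g
  erw [Finsupp.linearCombination_single, one_smul]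
  rfl
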